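/- Spectral gap for the number-of-minus-particles chain (Lemma 3.12): Let β > 0 and d ≥ 1. There exists a constant C_β, depending only on β, such that for every positive integer N and every integer K with 0 ≤ K ≤ |Ω_N|, where Ω_N = {1,...,N}^d, the following holds. Let χ = {0,1,...,⌊(|Ω_N|-K)/2⌋}, let r(l,l-1) = l(K+l)/|Ω_N| and r(l,l+1) = (|Ω_N|-K-2l)(|Ω_N|-K-2l-1)β/|Ω_N|, let m̃ be the probability measure on χ with m̃(l) proportional to β^l·|Ω_N|!/(l!·(K+l)!·(|Ω_N|-K-2l)!), and let the Dirichlet form be E(f) = Σ_{l ∈ χ, l+1 ∈ χ} m̃(l)·r(l,l+1)·(f(l+1)-f(l))². Then for every f : χ → R with Σ_l m̃(l) f(l) = 0, one has Σ_l m̃(l) f(l)² ≤ C_β·E(f). -/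

import Mathlib

open Finset

/-- Unnormalized weight of the push-forward of the canonical measure `μ_{N,K}` under the
number of minus particles: `β^l · Ω! / (l! (K+l)! (Ω-K-2l)!)`. -/
noncomputable def bdWeight (β : ℝ) (Ω K l : ℕ) : ℝ :=
  β ^ l * (Ω.factorial : ℝ) /
    ((l.factorial : ℝ) * ((K + l).factorial : ℝ) * ((Ω - K - 2 * l).factorial : ℝ))

/-- The probability measure `m̃` on `χ = {0,1,...,⌊(Ω-K)/2⌋}`. -/
noncomputable def bdMeasure (β : ℝ) (Ω K : ℕ) (l : ℕ) : ℝ :=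
  bdWeight β Ω K l / ∑ j ∈ Finset.range ((Ω - K) / 2 + 1), bdWeight β Ω K j

/-- The upward jump rate `r(l, l+1) = (Ω-K-2l)(Ω-K-2l-1)β/Ω`. -/
noncomputable def bdRateUp (β : ℝ) (Ω K : ℕ) (l : ℕ) : ℝ :=
  ((Ω : ℝ) - (K : ℝ) - 2 * (l : ℝ)) * ((Ω : ℝ) - (K : ℝ) - 2 * (l : ℝ) - 1) * β / (Ω : ℝ)

/-- The downward jump rate `r(l, l-1) = l(K+l)/Ω`. -/
noncomputable def bdRateDown (β : ℝ) (Ω K : ℕ) (l : ℕ) : ℝ :=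
  (l : ℝ) * ((K : ℝ) + (l : ℝ)) / (Ω : ℝ)

namespace BDaux

lemma fac_pos (n : ℕ) : (0:ℝ) < (n.factorial : ℝ) := by
  exact_mod_cast n.factorial_pos

lemma bdWeight_pos {β : ℝ} (hβ : 0 < β) (Ω K l : ℕ) : 0 < bdWeight β Ω K l := by
  unfold bdWeight
  apply div_pos
  · exact mul_pos (pow_pos hβ l) (fac_pos Ω)
  · exact mul_pos (mul_pos (fac_pos l) (fac_pos _)) (fac_pos _)

lemma Z_pos {β : ℝ} (hβ : 0 < β) (Ω K : ℕ) :
    0 < ∑ j ∈ Finset.range ((Ω - K) / 2 + 1), bdWeight β Ω K j := by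
  apply Finset.sum_pos (fun j _ => bdWeight_pos hβ Ω K j)
  exact Finset.nonempty_range_iff.mpr (Nat.succ_ne_zero _)

lemma bdMeasure_pos {β : ℝ} (hβ : 0 < β) (Ω K l : ℕ) : 0 < bdMeasure β Ω K l :=
  div_pos (bdWeight_pos hβ Ω K l) (Z_pos hβ Ω K)

lemma bdRateDown_zero (β : ℝ) (Ω K : ℕ) : bdRateDown β Ω K 0 = 0 := by
  simp [bdRateDown]

lemma cast_sub_eq {Ω K l : ℕ} (h : K + 2 * l ≤ Ω) :
    ((Ω - K - 2 * l : ℕ) : ℝ) = (Ω : ℝ) - (K : ℝ) - 2 * (l : ℝ) := by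
  have e : Ω - K - 2 * l = Ω - (K + 2 * l) := by omega
  rw [e, Nat.cast_sub h]
  push_cast; ring

lemma bdRateUp_top {β : ℝ} (Ω K : ℕ) (hK : K ≤ Ω) :
    bdRateUp β Ω K ((Ω - K) / 2) = 0 := by
  unfold bdRateUp
  rcases (by omega : 2 * ((Ω - K)/2) = Ω - K ∨ 2 * ((Ω - K)/2) + 1 = Ω - K) with h | h
  · have : (Ω : ℝ) - (K : ℝ) - 2 * (((Ω - K)/2 : ℕ) : ℝ) = 0 := by
      have := congrArg (fun n : ℕ => (n : ℝ)) h
      push_cast at this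
      rw [Nat.cast_sub hK] at this
      linarith
    rw [this]; ring
  · have : (Ω : ℝ) - (K : ℝ) - 2 * (((Ω - K)/2 : ℕ) : ℝ) = 1 := by
      have := congrArg (fun n : ℕ => (n : ℝ)) h
      push_cast at this
      rw [Nat.cast_sub hK] at this
      linarith
    rw [this]; ring

lemma bdRateUp_pos {β : ℝ} (hβ : 0 < β) {Ω K l : ℕ} (hK : K ≤ Ω)
    (hl : l < (Ω - K) / 2) : 0 < bdRateUp β Ω K l := by
  have h2 : K + 2 * l + 2 ≤ Ω := by omega
  have hx : (2:ℝ) ≤ (Ω : ℝ) - K - 2 * l := by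
    rw [← cast_sub_eq (by omega)]
    exact_mod_cast (by omega : 2 ≤ Ω - K - 2 * l)
  have hΩ : (0:ℝ) < (Ω:ℝ) := by exact_mod_cast (by omega : 0 < Ω)
  unfold bdRateUp
  apply div_pos _ hΩ
  apply mul_pos (mul_pos (by linarith) (by linarith)) hβ

-- detailed balance
lemma db {β : ℝ} (hβ : 0 < β) {Ω K : ℕ} (hK : K ≤ Ω) {l : ℕ} (hl : l < (Ω - K) / 2) :
    bdMeasure β Ω K l * bdRateUp β Ω K l
      = bdMeasure β Ω K (l + 1) * bdRateDown β Ω K (l + 1) := by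
  have key : bdWeight β Ω K l * bdRateUp β Ω K l
      = bdWeight β Ω K (l + 1) * bdRateDown β Ω K (l + 1) := by
    have h2 : K + 2 * l + 2 ≤ Ω := by omega
    set B := Ω - K - 2 * (l + 1) with hB
    have eA : Ω - K - 2 * l = B + 2 := by omega
    have cB : ((B : ℕ) : ℝ) = (Ω : ℝ) - K - 2 * l - 2 := by
      have : B = Ω - (K + 2 * l + 2) := by omega
      rw [this, Nat.cast_sub (by omega)]; push_cast; ring
    have e2 : (((B + 2).factorial : ℕ) : ℝ)
        = ((Ω : ℝ) - K - 2 * l) * ((Ω : ℝ) - K - 2 * l - 1) * (B.factorial : ℝ) := by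
      rw [Nat.factorial_succ, Nat.factorial_succ]
      push_cast
      rw [cB]; ring
    have fl1 : (((l + 1).factorial : ℕ) : ℝ) = ((l : ℝ) + 1) * (l.factorial : ℝ) := by
      rw [Nat.factorial_succ]; push_cast; ring
    have fk1 : (((K + (l + 1)).factorial : ℕ) : ℝ)
        = ((K : ℝ) + l + 1) * ((K + l).factorial : ℝ) := by
      have : K + (l + 1) = (K + l) + 1 := by omega
      rw [this, Nat.factorial_succ]; push_cast; ring
    have hfl : (l.factorial : ℝ) ≠ 0 := (fac_pos l).ne'
    have hfk : ((K + l).factorial : ℝ) ≠ 0 := (fac_pos _).ne'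
    have hfB : (B.factorial : ℝ) ≠ 0 := (fac_pos _).ne'
    have hΩ : (Ω : ℝ) ≠ 0 := by
      have : (0:ℝ) < (Ω : ℝ) := by exact_mod_cast (by omega : 0 < Ω)
      exact this.ne'
    have hx : (2:ℝ) ≤ (Ω : ℝ) - K - 2 * l := by
      have : (0:ℝ) ≤ (B : ℝ) := B.cast_nonneg
      linarith [cB ▸ this]
    have hx0 : ((Ω : ℝ) - K - 2 * l) ≠ 0 := by linarith
    have hx1 : ((Ω : ℝ) - K - 2 * l - 1) ≠ 0 := by linarith
    have hl1 : ((l : ℝ) + 1) ≠ 0 := by positivity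
    have hk1 : ((K : ℝ) + l + 1) ≠ 0 := by positivity
    unfold bdWeight bdRateUp bdRateDown
    rw [show Ω - K - 2 * (l + 1) = B from rfl, eA, e2, fl1, fk1]
    push_cast
    field_simp
    ring
  unfold bdMeasure
  rw [div_mul_eq_mul_div, div_mul_eq_mul_div, key]

noncomputable def Lop (β : ℝ) (Ω K : ℕ) (f : ℕ → ℝ) (l : ℕ) : ℝ :=
  bdRateUp β Ω K l * (f (l + 1) - f l) + bdRateDown β Ω K l * (f (l - 1) - f l)

noncomputable def Dir (β : ℝ) (Ω K : ℕ) (f g : ℕ → ℝ) : ℝ :=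
  ∑ l ∈ Finset.range ((Ω - K) / 2),
    bdMeasure β Ω K l * bdRateUp β Ω K l * ((f (l + 1) - f l) * (g (l + 1) - g l))

lemma sbp {β : ℝ} (hβ : 0 < β) {Ω K : ℕ} (hK : K ≤ Ω) (f g : ℕ → ℝ) :
    ∑ l ∈ Finset.range ((Ω - K) / 2 + 1), bdMeasure β Ω K l * f l * Lop β Ω K g l
      = - Dir β Ω K f g := by
  have split : ∀ l, bdMeasure β Ω K l * f l * Lop β Ω K g l
      = bdMeasure β Ω K l * bdRateUp β Ω K l * (f l * (g (l + 1) - g l))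
        + bdMeasure β Ω K l * bdRateDown β Ω K l * (f l * (g (l - 1) - g l)) := by
    intro l; unfold Lop; ring
  rw [Finset.sum_congr rfl (fun l _ => split l), Finset.sum_add_distrib]
  have hA1 : ∑ l ∈ Finset.range ((Ω - K) / 2 + 1),
        bdMeasure β Ω K l * bdRateUp β Ω K l * (f l * (g (l + 1) - g l))
      = ∑ l ∈ Finset.range ((Ω - K) / 2),
        bdMeasure β Ω K l * bdRateUp β Ω K l * (f l * (g (l + 1) - g l)) := by
    rw [Finset.sum_range_succ, bdRateUp_top Ω K hK]
    ring
  have hA2 : ∑ l ∈ Finset.range ((Ω - K) / 2 + 1),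
        bdMeasure β Ω K l * bdRateDown β Ω K l * (f l * (g (l - 1) - g l))
      = ∑ l ∈ Finset.range ((Ω - K) / 2),
        bdMeasure β Ω K l * bdRateUp β Ω K l * (f (l + 1) * (g l - g (l + 1))) := by
    rw [Finset.sum_range_succ']
    rw [bdRateDown_zero]
    simp only [Nat.add_sub_cancel, mul_zero, zero_mul, add_zero]
    refine Finset.sum_congr rfl (fun l hl => ?_)
    rw [← db hβ hK (Finset.mem_range.mp hl)]
  rw [hA1, hA2, ← Finset.sum_add_distrib]
  unfold Dir
  rw [← Finset.sum_neg_distrib]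
  refine Finset.sum_congr rfl (fun l _ => ?_)
  ring

lemma Vbound {β : ℝ} (hβ : 0 < β) {Ω K : ℕ} (hK : K ≤ Ω) {l : ℕ}
    (hl : l < (Ω - K) / 2) :
    min 1 β / 2 ≤ bdRateUp β Ω K l + bdRateDown β Ω K (l + 1)
      - bdRateUp β Ω K (l + 1) - bdRateDown β Ω K l := by
  have h2 : K + 2 * l + 2 ≤ Ω := by omega
  have hx : (0:ℝ) < (Ω : ℝ) := by exact_mod_cast (by omega : 0 < Ω)
  have hs2 : (2:ℝ) ≤ (Ω : ℝ) - K - 2 * l := by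
    rw [← cast_sub_eq (by omega : K + 2 * l ≤ Ω)]
    exact_mod_cast (by omega : 2 ≤ Ω - K - 2 * l)
  have hKl : (0:ℝ) ≤ (K : ℝ) + 2 * l := by positivity
  set s : ℝ := (Ω : ℝ) - K - 2 * l with hs
  have hE : bdRateUp β Ω K l + bdRateDown β Ω K (l + 1)
      - bdRateUp β Ω K (l + 1) - bdRateDown β Ω K l
      = (((Ω : ℝ) - s + 1) + β * (4 * s - 6)) / (Ω : ℝ) := by
    unfold bdRateUp bdRateDown
    push_cast
    rw [← add_div, ← sub_div, ← sub_div]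
    congr 1
    rw [hs]; ring
  rw [hE]
  have hnum : min 1 β * (Ω : ℝ) / 2 ≤ ((Ω : ℝ) - s + 1) + β * (4 * s - 6) := by
    have hmin1 : min 1 β ≤ 1 := min_le_left _ _
    have hminβ : min 1 β ≤ β := min_le_right _ _
    have hminpos : 0 < min 1 β := lt_min one_pos hβ
    rcases le_or_gt (2 * s) (Ω : ℝ) with hc | hc
    · have h46 : 0 ≤ β * (4 * s - 6 - s) := by
        apply mul_nonneg hβ.le; linarith
      nlinarith
    · have hsΩ : s ≤ (Ω : ℝ) := by rw [hs]; linarith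
      have hβs : β * (Ω : ℝ) / 2 ≤ β * s := by nlinarith
      have h46 : β * s ≤ β * (4 * s - 6) := by nlinarith
      nlinarith
  calc min 1 β / 2 = (min 1 β * (Ω : ℝ) / 2) / (Ω : ℝ) := by
        field_simp
    _ ≤ (((Ω : ℝ) - s + 1) + β * (4 * s - 6)) / (Ω : ℝ) := (div_le_div_iff_of_pos_right hx).mpr hnum

lemma BE {β : ℝ} (hβ : 0 < β) {Ω K : ℕ} (hK : K ≤ Ω) (f : ℕ → ℝ) :
    (min 1 β / 2) * Dir β Ω K f f
      ≤ ∑ l ∈ Finset.range ((Ω - K) / 2 + 1),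
          bdMeasure β Ω K l * (Lop β Ω K f l) ^ 2 := by
  have step1 : ∑ l ∈ Finset.range ((Ω - K) / 2 + 1),
        bdMeasure β Ω K l * (Lop β Ω K f l) ^ 2
      = - Dir β Ω K (Lop β Ω K f) f := by
    rw [← sbp hβ hK (Lop β Ω K f) f]
    exact Finset.sum_congr rfl (fun l _ => by ring)
  rw [step1]
  rcases Nat.eq_zero_or_pos ((Ω - K) / 2) with hM0 | hMpos
  · unfold Dir; rw [hM0]; simp
  obtain ⟨M', hM'⟩ : ∃ M', (Ω - K) / 2 = M' + 1 := ⟨(Ω - K) / 2 - 1, by omega⟩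
  set G : ℕ → ℝ := fun j => f (j + 1) - f j with hG
  have DeltaL : ∀ l : ℕ, Lop β Ω K f (l + 1) - Lop β Ω K f l
      = bdRateUp β Ω K (l + 1) * G (l + 1)
        - (bdRateUp β Ω K l + bdRateDown β Ω K (l + 1)) * G l
        + bdRateDown β Ω K l * (f l - f (l - 1)) := by
    intro l
    unfold Lop
    simp only [hG, Nat.add_sub_cancel]
    ring
  have expand : - Dir β Ω K (Lop β Ω K f) f
      = (∑ l ∈ Finset.range ((Ω - K) / 2),
          bdMeasure β Ω K l * bdRateUp β Ω K l *
            ((bdRateUp β Ω K l + bdRateDown β Ω K (l + 1)) * (G l * G l)))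
        - (∑ l ∈ Finset.range ((Ω - K) / 2),
            bdMeasure β Ω K l * bdRateUp β Ω K l * bdRateUp β Ω K (l + 1) * (G (l + 1) * G l))
        - (∑ l ∈ Finset.range ((Ω - K) / 2),
            bdMeasure β Ω K l * bdRateUp β Ω K l * bdRateDown β Ω K l *
              ((f l - f (l - 1)) * G l)) := by
    unfold Dir
    rw [← Finset.sum_sub_distrib, ← Finset.sum_sub_distrib, ← Finset.sum_neg_distrib]
    refine Finset.sum_congr rfl (fun l _ => ?_)
    rw [DeltaL l]
    simp only [hG]
    ring
  rw [expand]
  have hu0 : bdRateUp β Ω K (M' + 1) = 0 := by rw [← hM']; exact bdRateUp_top Ω K hK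
  -- E1
  have E1 : (min 1 β / 2) * Dir β Ω K f f
      ≤ (∑ l ∈ Finset.range ((Ω - K) / 2),
          bdMeasure β Ω K l * bdRateUp β Ω K l *
            ((bdRateUp β Ω K l + bdRateDown β Ω K (l + 1)) * (G l * G l)))
        - (∑ l ∈ Finset.range ((Ω - K) / 2),
            bdMeasure β Ω K l * bdRateUp β Ω K l * bdRateUp β Ω K (l + 1) * (G l * G l))
        - (∑ l ∈ Finset.range ((Ω - K) / 2),
            bdMeasure β Ω K l * bdRateUp β Ω K l * bdRateDown β Ω K l * (G l * G l)) := by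
    unfold Dir
    rw [Finset.mul_sum, ← Finset.sum_sub_distrib, ← Finset.sum_sub_distrib]
    refine Finset.sum_le_sum (fun l hl => ?_)
    have hl' : l < (Ω - K) / 2 := Finset.mem_range.mp hl
    have hw : (0:ℝ) ≤ bdMeasure β Ω K l * bdRateUp β Ω K l
        * ((f (l + 1) - f l) * (f (l + 1) - f l)) :=
      mul_nonneg (mul_nonneg (bdMeasure_pos hβ Ω K l).le (bdRateUp_pos hβ hK hl').le)
        (mul_self_nonneg _)
    have h := mul_le_mul_of_nonneg_right (Vbound hβ hK hl') hw
    simp only [hG]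
    nlinarith [h]
  -- X = Sφ
  have hXX : (∑ l ∈ Finset.range ((Ω - K) / 2),
        bdMeasure β Ω K l * bdRateUp β Ω K l * bdRateUp β Ω K (l + 1) * (G (l + 1) * G l))
      = ∑ l ∈ Finset.range M',
          bdMeasure β Ω K l * bdRateUp β Ω K l * bdRateUp β Ω K (l + 1) * (G (l + 1) * G l) := by
    rw [hM', Finset.sum_range_succ, hu0]
    ring
  -- Y = Sφ
  have hYY : (∑ l ∈ Finset.range ((Ω - K) / 2),
        bdMeasure β Ω K l * bdRateUp β Ω K l * bdRateDown β Ω K l * ((f l - f (l - 1)) * G l))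
      = ∑ l ∈ Finset.range M',
          bdMeasure β Ω K l * bdRateUp β Ω K l * bdRateUp β Ω K (l + 1) * (G (l + 1) * G l) := by
    rw [hM', Finset.sum_range_succ', bdRateDown_zero]
    simp only [Nat.add_sub_cancel, mul_zero, zero_mul, add_zero]
    refine Finset.sum_congr rfl (fun l hl => ?_)
    have hl' : l < (Ω - K) / 2 := by
      have := Finset.mem_range.mp hl; omega
    have hdb : bdMeasure β Ω K (l + 1) * bdRateDown β Ω K (l + 1)
        = bdMeasure β Ω K l * bdRateUp β Ω K l := (db hβ hK hl').symm
    calc bdMeasure β Ω K (l + 1) * bdRateUp β Ω K (l + 1) * bdRateDown β Ω K (l + 1) *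
          ((f (l + 1) - f l) * G (l + 1))
        = (bdMeasure β Ω K (l + 1) * bdRateDown β Ω K (l + 1)) *
            (bdRateUp β Ω K (l + 1) * ((f (l + 1) - f l) * G (l + 1))) := by ring
      _ = (bdMeasure β Ω K l * bdRateUp β Ω K l) *
            (bdRateUp β Ω K (l + 1) * ((f (l + 1) - f l) * G (l + 1))) := by rw [hdb]
      _ = bdMeasure β Ω K l * bdRateUp β Ω K l * bdRateUp β Ω K (l + 1) * (G (l + 1) * G l) := by
          simp only [hG]; ring
  -- P restriction
  have hPP : (∑ l ∈ Finset.range ((Ω - K) / 2),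
        bdMeasure β Ω K l * bdRateUp β Ω K l * bdRateUp β Ω K (l + 1) * (G l * G l))
      = ∑ l ∈ Finset.range M',
          bdMeasure β Ω K l * bdRateUp β Ω K l * bdRateUp β Ω K (l + 1) * (G l * G l) := by
    rw [hM', Finset.sum_range_succ, hu0]
    ring
  -- W restriction
  have hWW : (∑ l ∈ Finset.range ((Ω - K) / 2),
        bdMeasure β Ω K l * bdRateUp β Ω K l * bdRateDown β Ω K l * (G l * G l))
      = ∑ l ∈ Finset.range M',
          bdMeasure β Ω K l * bdRateUp β Ω K l * bdRateUp β Ω K (l + 1) * (G (l + 1) * G (l + 1)) := by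
    rw [hM', Finset.sum_range_succ', bdRateDown_zero]
    simp only [mul_zero, zero_mul, add_zero]
    refine Finset.sum_congr rfl (fun l hl => ?_)
    have hl' : l < (Ω - K) / 2 := by
      have := Finset.mem_range.mp hl; omega
    have hdb : bdMeasure β Ω K (l + 1) * bdRateDown β Ω K (l + 1)
        = bdMeasure β Ω K l * bdRateUp β Ω K l := (db hβ hK hl').symm
    calc bdMeasure β Ω K (l + 1) * bdRateUp β Ω K (l + 1) * bdRateDown β Ω K (l + 1) *
          (G (l + 1) * G (l + 1))
        = (bdMeasure β Ω K (l + 1) * bdRateDown β Ω K (l + 1)) *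
            (bdRateUp β Ω K (l + 1) * (G (l + 1) * G (l + 1))) := by ring
      _ = (bdMeasure β Ω K l * bdRateUp β Ω K l) *
            (bdRateUp β Ω K (l + 1) * (G (l + 1) * G (l + 1))) := by rw [hdb]
      _ = bdMeasure β Ω K l * bdRateUp β Ω K l * bdRateUp β Ω K (l + 1) *
            (G (l + 1) * G (l + 1)) := by ring
  -- AM-GM
  have E6 : 2 * (∑ l ∈ Finset.range M',
        bdMeasure β Ω K l * bdRateUp β Ω K l * bdRateUp β Ω K (l + 1) * (G (l + 1) * G l))
      ≤ (∑ l ∈ Finset.range M',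
          bdMeasure β Ω K l * bdRateUp β Ω K l * bdRateUp β Ω K (l + 1) * (G l * G l))
        + (∑ l ∈ Finset.range M',
          bdMeasure β Ω K l * bdRateUp β Ω K l * bdRateUp β Ω K (l + 1) * (G (l + 1) * G (l + 1))) := by
    rw [Finset.mul_sum, ← Finset.sum_add_distrib]
    refine Finset.sum_le_sum (fun l hl => ?_)
    have hlm := Finset.mem_range.mp hl
    have hl1 : l < (Ω - K) / 2 := by omega
    have hl2 : l + 1 < (Ω - K) / 2 + 1 := by omega
    have hl2' : l + 1 < (Ω - K) / 2 ∨ l + 1 = (Ω - K) / 2 := by omega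
    have hu1 : (0:ℝ) ≤ bdRateUp β Ω K (l + 1) := by
      rcases hl2' with h | h
      · exact (bdRateUp_pos hβ hK h).le
      · rw [h, bdRateUp_top Ω K hK]
    have hw : (0:ℝ) ≤ bdMeasure β Ω K l * bdRateUp β Ω K l * bdRateUp β Ω K (l + 1) :=
      mul_nonneg (mul_nonneg (bdMeasure_pos hβ Ω K l).le (bdRateUp_pos hβ hK hl1).le) hu1
    nlinarith [mul_nonneg hw (sq_nonneg (G l - G (l + 1)))]
  linarith [E1, hXX, hYY, hPP, hWW, E6]

noncomputable def extend (M : ℕ) (v : Fin (M + 1) → ℝ) : ℕ → ℝ :=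
  fun l => if h : l < M + 1 then v ⟨l, h⟩ else 0

lemma sum_Lop_zero {β : ℝ} (hβ : 0 < β) {Ω K : ℕ} (hK : K ≤ Ω) (g : ℕ → ℝ) :
    ∑ l ∈ Finset.range ((Ω - K) / 2 + 1), bdMeasure β Ω K l * Lop β Ω K g l = 0 := by
  have h := sbp hβ hK (fun _ => 1) g
  have hD : Dir β Ω K (fun _ => 1) g = 0 := by unfold Dir; simp
  rw [hD, neg_zero] at h
  rw [← h]
  exact Finset.sum_congr rfl (fun l _ => by ring)

lemma sum_meas_pos {β : ℝ} (hβ : 0 < β) (Ω K : ℕ) :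
    0 < ∑ l ∈ Finset.range ((Ω - K) / 2 + 1), bdMeasure β Ω K l := by
  apply Finset.sum_pos (fun l _ => bdMeasure_pos hβ Ω K l)
  exact Finset.nonempty_range_iff.mpr (Nat.succ_ne_zero _)

noncomputable def Top (β : ℝ) (Ω K : ℕ) :
    (Fin ((Ω - K) / 2 + 1) → ℝ) →ₗ[ℝ] (Fin ((Ω - K) / 2 + 1) → ℝ) where
  toFun v := fun i =>
    - Lop β Ω K (extend ((Ω - K) / 2) v) i
      + ∑ l ∈ Finset.range ((Ω - K) / 2 + 1),
          bdMeasure β Ω K l * extend ((Ω - K) / 2) v l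
  map_add' v w := by
    have he : extend ((Ω - K) / 2) (v + w)
        = fun l => extend ((Ω - K) / 2) v l + extend ((Ω - K) / 2) w l := by
      funext l; unfold extend; split <;> simp
    funext i
    have hL : ∀ (p q : ℕ → ℝ) (j : ℕ),
        Lop β Ω K (fun l => p l + q l) j = Lop β Ω K p j + Lop β Ω K q j := by
      intro p q j; unfold Lop; ring
    simp only [he, Pi.add_apply]
    rw [hL]
    have hs : ∀ l : ℕ, bdMeasure β Ω K l *
          (extend ((Ω - K) / 2) v l + extend ((Ω - K) / 2) w l)
        = bdMeasure β Ω K l * extend ((Ω - K) / 2) v l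
          + bdMeasure β Ω K l * extend ((Ω - K) / 2) w l := fun l => by ring
    rw [Finset.sum_congr rfl (fun l _ => hs l), Finset.sum_add_distrib]
    ring
  map_smul' c v := by
    have he : extend ((Ω - K) / 2) (c • v)
        = fun l => c * extend ((Ω - K) / 2) v l := by
      funext l; unfold extend; split <;> simp
    funext i
    have hL : ∀ (p : ℕ → ℝ) (j : ℕ),
        Lop β Ω K (fun l => c * p l) j = c * Lop β Ω K p j := by
      intro p j; unfold Lop; ring
    simp only [he, Pi.smul_apply, smul_eq_mul, RingHom.id_apply]
    rw [hL]
    have hs : ∀ l : ℕ, bdMeasure β Ω K l * (c * extend ((Ω - K) / 2) v l)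
        = c * (bdMeasure β Ω K l * extend ((Ω - K) / 2) v l) := fun l => by ring
    rw [Finset.sum_congr rfl (fun l _ => hs l), ← Finset.mul_sum]
    ring

lemma exists_inverse {β : ℝ} (hβ : 0 < β) {Ω K : ℕ} (hK : K ≤ Ω) (f : ℕ → ℝ)
    (hf : ∑ l ∈ Finset.range ((Ω - K) / 2 + 1), bdMeasure β Ω K l * f l = 0) :
    ∃ g : ℕ → ℝ, ∀ l < (Ω - K) / 2 + 1, Lop β Ω K g l = - f l := by
  have hinj : Function.Injective (Top β Ω K) := by
    rw [injective_iff_map_eq_zero]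
    intro v hv
    set g := extend ((Ω - K) / 2) v with hg
    have hv' : ∀ l, l < (Ω - K) / 2 + 1 → Lop β Ω K g l
        = ∑ j ∈ Finset.range ((Ω - K) / 2 + 1), bdMeasure β Ω K j * g j := by
      intro l hl
      have h0 := congrFun hv ⟨l, hl⟩
      simp only [Top, LinearMap.coe_mk, AddHom.coe_mk, Pi.zero_apply] at h0
      rw [← hg] at h0
      linarith [h0]
    have hsum := sum_Lop_zero hβ hK g
    set S := ∑ j ∈ Finset.range ((Ω - K) / 2 + 1), bdMeasure β Ω K j * g j with hS
    have hSz : S = 0 := by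
      have : ∑ l ∈ Finset.range ((Ω - K) / 2 + 1), bdMeasure β Ω K l * Lop β Ω K g l
          = (∑ l ∈ Finset.range ((Ω - K) / 2 + 1), bdMeasure β Ω K l) * S := by
        rw [Finset.sum_mul]
        refine Finset.sum_congr rfl (fun l hl => ?_)
        rw [hv' l (Finset.mem_range.mp hl)]
      rw [this] at hsum
      have := sum_meas_pos hβ Ω K
      exact (mul_eq_zero.mp hsum).resolve_left (by positivity)
    have hLz : ∀ l < (Ω - K) / 2 + 1, Lop β Ω K g l = 0 := by
      intro l hl; rw [hv' l hl]; exact hSz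
    have hDz : Dir β Ω K g g = 0 := by
      have h := sbp hβ hK g g
      have : ∑ l ∈ Finset.range ((Ω - K) / 2 + 1), bdMeasure β Ω K l * g l * Lop β Ω K g l
          = 0 := by
        apply Finset.sum_eq_zero
        intro l hl
        rw [hLz l (Finset.mem_range.mp hl), mul_zero]
      rw [this] at h
      linarith
    have hstep : ∀ l < (Ω - K) / 2, g (l + 1) = g l := by
      unfold Dir at hDz
      have hnn : ∀ i ∈ Finset.range ((Ω - K) / 2),
          0 ≤ bdMeasure β Ω K i * bdRateUp β Ω K i * ((g (i + 1) - g i) * (g (i + 1) - g i)) := by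
        intro j hj
        have hj' := Finset.mem_range.mp hj
        exact mul_nonneg
          (mul_pos (bdMeasure_pos hβ Ω K j) (bdRateUp_pos hβ hK hj')).le (mul_self_nonneg _)
      intro l hl
      have hterms := (Finset.sum_eq_zero_iff_of_nonneg hnn).mp hDz l (Finset.mem_range.mpr hl)
      have hmu : 0 < bdMeasure β Ω K l * bdRateUp β Ω K l :=
        mul_pos (bdMeasure_pos hβ Ω K l) (bdRateUp_pos hβ hK hl)
      have hz : (g (l + 1) - g l) * (g (l + 1) - g l) = 0 := by
        rcases mul_eq_zero.mp hterms with h | h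
        · exact absurd h hmu.ne'
        · exact h
      have := mul_self_eq_zero.mp hz
      exact sub_eq_zero.mp this
    have hconst : ∀ l < (Ω - K) / 2 + 1, g l = g 0 := by
      intro l hl
      induction l with
      | zero => rfl
      | succ n ih =>
        have hn : n < (Ω - K) / 2 := by omega
        rw [hstep n hn, ih (by omega)]
    have hg0 : g 0 = 0 := by
      have : S = (∑ l ∈ Finset.range ((Ω - K) / 2 + 1), bdMeasure β Ω K l) * g 0 := by
        rw [hS, Finset.sum_mul]
        refine Finset.sum_congr rfl (fun l hl => ?_)
        rw [hconst l (Finset.mem_range.mp hl)]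
      rw [hSz] at this
      have hpos := sum_meas_pos hβ Ω K
      have := this.symm
      exact (mul_eq_zero.mp this).resolve_left (by positivity)
    funext i
    have : g (i : ℕ) = v i := by
      rw [hg]; unfold extend
      rw [dif_pos i.isLt]
    rw [Pi.zero_apply, ← this, hconst (i : ℕ) i.isLt, hg0]
  have hsurj := LinearMap.injective_iff_surjective.mp hinj
  obtain ⟨v, hv⟩ := hsurj (fun i => f (i : ℕ))
  set g := extend ((Ω - K) / 2) v with hg
  have hv' : ∀ l, (hl : l < (Ω - K) / 2 + 1) → - Lop β Ω K g l
      + (∑ j ∈ Finset.range ((Ω - K) / 2 + 1), bdMeasure β Ω K j * g j) = f l := by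
    intro l hl
    have h0 := congrFun hv ⟨l, hl⟩
    simpa only [Top, LinearMap.coe_mk, AddHom.coe_mk, ← hg] using h0
  set S := ∑ j ∈ Finset.range ((Ω - K) / 2 + 1), bdMeasure β Ω K j * g j with hS
  have hSz : S = 0 := by
    have hsum := sum_Lop_zero hβ hK g
    have hsplit : ∑ l ∈ Finset.range ((Ω - K) / 2 + 1), bdMeasure β Ω K l * f l
        = ∑ l ∈ Finset.range ((Ω - K) / 2 + 1),
            (bdMeasure β Ω K l * (- Lop β Ω K g l) + bdMeasure β Ω K l * S) := by
      refine Finset.sum_congr rfl (fun l hl => ?_)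
      rw [← hv' l (Finset.mem_range.mp hl)]
      ring
    rw [hsplit, Finset.sum_add_distrib] at hf
    have h1 : ∑ l ∈ Finset.range ((Ω - K) / 2 + 1), bdMeasure β Ω K l * (- Lop β Ω K g l)
        = 0 := by
      have : ∑ l ∈ Finset.range ((Ω - K) / 2 + 1), bdMeasure β Ω K l * (- Lop β Ω K g l)
          = - ∑ l ∈ Finset.range ((Ω - K) / 2 + 1), bdMeasure β Ω K l * Lop β Ω K g l := by
        rw [← Finset.sum_neg_distrib]
        exact Finset.sum_congr rfl (fun l _ => by ring)
      rw [this, hsum, neg_zero]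
    rw [h1, zero_add, ← Finset.sum_mul] at hf
    have hpos := sum_meas_pos hβ Ω K
    exact (mul_eq_zero.mp hf).resolve_left (by positivity)
  refine ⟨g, fun l hl => ?_⟩
  have := hv' l hl
  rw [hSz] at this
  linarith

end BDaux


/-- Lemma 3.12: uniform spectral gap for the birth-and-death chain of the
number of minus particles, with `Ω = |Ω_N| = N^d` and total charge `0 ≤ K ≤ |Ω_N|`. -/
theorem birth_death_spectral_gap (β : ℝ) (hβ : 0 < β) (d : ℕ) (hd : 1 ≤ d) :
    ∃ C : ℝ, ∀ N : ℕ, 0 < N → ∀ K : ℕ, K ≤ N ^ d →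
      ∀ f : ℕ → ℝ,
        (∑ l ∈ Finset.range ((N ^ d - K) / 2 + 1), bdMeasure β (N ^ d) K l * f l) = 0 →
        (∑ l ∈ Finset.range ((N ^ d - K) / 2 + 1), bdMeasure β (N ^ d) K l * f l ^ 2) ≤
          C * ∑ l ∈ Finset.range ((N ^ d - K) / 2),
            bdMeasure β (N ^ d) K l * bdRateUp β (N ^ d) K l * (f (l + 1) - f l) ^ 2 := by
  refine ⟨2 / min 1 β, ?_⟩
  intro N hN K hK f hf
  set Ω := N ^ d with hΩdef
  have hμ : (0:ℝ) < min 1 β := lt_min one_pos hβ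
  obtain ⟨g, hg⟩ := BDaux.exists_inverse hβ hK f hf
  set Var := ∑ l ∈ Finset.range ((Ω - K) / 2 + 1), bdMeasure β Ω K l * f l ^ 2 with hVar
  have hVnn : 0 ≤ Var := by
    rw [hVar]
    apply Finset.sum_nonneg
    intro l _
    exact mul_nonneg (BDaux.bdMeasure_pos hβ Ω K l).le (sq_nonneg _)
  have hDffnn : 0 ≤ BDaux.Dir β Ω K f f := by
    unfold BDaux.Dir
    apply Finset.sum_nonneg
    intro l hl
    exact mul_nonneg
      (mul_nonneg (BDaux.bdMeasure_pos hβ Ω K l).le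
        (BDaux.bdRateUp_pos hβ hK (Finset.mem_range.mp hl)).le)
      (mul_self_nonneg _)
  -- (1) Var = Dir f g
  have h1 : ∑ l ∈ Finset.range ((Ω - K) / 2 + 1), bdMeasure β Ω K l * f l * BDaux.Lop β Ω K g l
      = - Var := by
    rw [hVar, ← Finset.sum_neg_distrib]
    refine Finset.sum_congr rfl (fun l hl => ?_)
    rw [hg l (Finset.mem_range.mp hl)]
    ring
  have hVf : BDaux.Dir β Ω K f g = Var := by
    have := BDaux.sbp hβ hK f g
    rw [h1] at this
    linarith
  -- (2) (min 1 β / 2) * Dir g g ≤ Var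
  have h2 : (min 1 β / 2) * BDaux.Dir β Ω K g g ≤ Var := by
    have hbe := BDaux.BE hβ hK g
    have heq : ∑ l ∈ Finset.range ((Ω - K) / 2 + 1), bdMeasure β Ω K l * (BDaux.Lop β Ω K g l) ^ 2
        = Var := by
      rw [hVar]
      refine Finset.sum_congr rfl (fun l hl => ?_)
      rw [hg l (Finset.mem_range.mp hl)]
      ring
    rw [heq] at hbe
    exact hbe
  -- (3) Cauchy-Schwarz
  have h3 : (BDaux.Dir β Ω K f g) ^ 2 ≤ BDaux.Dir β Ω K f f * BDaux.Dir β Ω K g g := by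
    set a : ℕ → ℝ := fun l => Real.sqrt (bdMeasure β Ω K l * bdRateUp β Ω K l) * (f (l + 1) - f l)
      with ha
    set b : ℕ → ℝ := fun l => Real.sqrt (bdMeasure β Ω K l * bdRateUp β Ω K l) * (g (l + 1) - g l)
      with hb
    have hmu : ∀ l ∈ Finset.range ((Ω - K) / 2), 0 ≤ bdMeasure β Ω K l * bdRateUp β Ω K l := by
      intro l hl
      exact mul_nonneg (BDaux.bdMeasure_pos hβ Ω K l).le
        (BDaux.bdRateUp_pos hβ hK (Finset.mem_range.mp hl)).le
    have hfg : BDaux.Dir β Ω K f g = ∑ l ∈ Finset.range ((Ω - K) / 2), a l * b l := by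
      unfold BDaux.Dir
      refine Finset.sum_congr rfl (fun l hl => ?_)
      rw [ha, hb]
      calc bdMeasure β Ω K l * bdRateUp β Ω K l * ((f (l + 1) - f l) * (g (l + 1) - g l))
          = (Real.sqrt (bdMeasure β Ω K l * bdRateUp β Ω K l) *
              Real.sqrt (bdMeasure β Ω K l * bdRateUp β Ω K l)) *
              ((f (l + 1) - f l) * (g (l + 1) - g l)) := by
            rw [Real.mul_self_sqrt (hmu l hl)]
        _ = _ := by ring
    have hff : BDaux.Dir β Ω K f f = ∑ l ∈ Finset.range ((Ω - K) / 2), a l ^ 2 := by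
      unfold BDaux.Dir
      refine Finset.sum_congr rfl (fun l hl => ?_)
      rw [ha]
      calc bdMeasure β Ω K l * bdRateUp β Ω K l * ((f (l + 1) - f l) * (f (l + 1) - f l))
          = (Real.sqrt (bdMeasure β Ω K l * bdRateUp β Ω K l) *
              Real.sqrt (bdMeasure β Ω K l * bdRateUp β Ω K l)) *
              ((f (l + 1) - f l) * (f (l + 1) - f l)) := by
            rw [Real.mul_self_sqrt (hmu l hl)]
        _ = _ := by ring
    have hgg : BDaux.Dir β Ω K g g = ∑ l ∈ Finset.range ((Ω - K) / 2), b l ^ 2 := by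
      unfold BDaux.Dir
      refine Finset.sum_congr rfl (fun l hl => ?_)
      rw [hb]
      calc bdMeasure β Ω K l * bdRateUp β Ω K l * ((g (l + 1) - g l) * (g (l + 1) - g l))
          = (Real.sqrt (bdMeasure β Ω K l * bdRateUp β Ω K l) *
              Real.sqrt (bdMeasure β Ω K l * bdRateUp β Ω K l)) *
              ((g (l + 1) - g l) * (g (l + 1) - g l)) := by
            rw [Real.mul_self_sqrt (hmu l hl)]
        _ = _ := by ring
    rw [hfg, hff, hgg]
    exact Finset.sum_mul_sq_le_sq_mul_sq _ a b
  -- convert goal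
  have hgoal : ∑ l ∈ Finset.range ((Ω - K) / 2),
        bdMeasure β Ω K l * bdRateUp β Ω K l * (f (l + 1) - f l) ^ 2
      = BDaux.Dir β Ω K f f := by
    unfold BDaux.Dir
    exact Finset.sum_congr rfl (fun l _ => by ring)
  rw [hgoal]
  rcases eq_or_lt_of_le hVnn with hV0 | hVpos
  · rw [← hV0]
    positivity
  -- Var > 0 case
  have hB' : BDaux.Dir β Ω K g g ≤ (2 / min 1 β) * Var := by
    have hmul := mul_le_mul_of_nonneg_left h2 (by positivity : (0:ℝ) ≤ 2 / min 1 β)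
    have hl : (2 / min 1 β) * ((min 1 β / 2) * BDaux.Dir β Ω K g g) = BDaux.Dir β Ω K g g := by
      field_simp
    rw [hl] at hmul
    exact hmul
  have h7 : Var * Var ≤ BDaux.Dir β Ω K f f * ((2 / min 1 β) * Var) := by
    calc Var * Var = (BDaux.Dir β Ω K f g) ^ 2 := by rw [hVf]; ring
      _ ≤ BDaux.Dir β Ω K f f * BDaux.Dir β Ω K g g := h3
      _ ≤ BDaux.Dir β Ω K f f * ((2 / min 1 β) * Var) :=
          mul_le_mul_of_nonneg_left hB' hDffnn
  have h8 : min 1 β * (Var * Var) ≤ 2 * BDaux.Dir β Ω K f f * Var := by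
    have hmul := mul_le_mul_of_nonneg_left h7 hμ.le
    have hr : min 1 β * (BDaux.Dir β Ω K f f * ((2 / min 1 β) * Var))
        = 2 * BDaux.Dir β Ω K f f * Var := by
      field_simp
    rw [hr] at hmul
    exact hmul
  nlinarith [h8, hVpos, hμ, hDffnn]
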